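/- Define C^d_{r,i} as the coefficient of z^r in (z+i)(z+i-1)···(z+i-(d-1)). Then C^d_{d-2,i} - C^d_{d-2,i-1} = d(d-1)(-d+2i)/2 for all integers i, so the function i ↦ C^d_{d-2,i} is minimized over 0 ≤ i ≤ d at i = ⌊d/2⌋. -/

import Mathlib

/-- `Cc d r i` is the coefficient of `z^r` in `(z+i)(z+i-1)⋯(z+i-(d-1))`. -/
noncomputable def Cc (d r : ℕ) (i : ℤ) : ℤ :=
  (∏ j ∈ Finset.range d, (Polynomial.X + Polynomial.C (i - j))).coeff r

open Polynomial Finset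

lemma myCoeff_mul_X_add_C (P : ℤ[X]) (a : ℤ) (k : ℕ) :
    (P * (X + C a)).coeff (k+1) = P.coeff k + a * P.coeff (k+1) := by
  rw [mul_add, coeff_add, mul_comm P X, coeff_X_mul, coeff_mul_C]
  ring

lemma myCoeff_top (c : ℕ → ℤ) (d : ℕ) :
    (∏ j ∈ range d, (X + C (c j))).coeff d = 1 := by
  have hm : (∏ j ∈ range d, (X + C (c j))).Monic :=
    monic_prod_of_monic _ _ fun j _ => monic_X_add_C _
  have hdeg : (∏ j ∈ range d, (X + C (c j))).natDegree = d := by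
    rw [natDegree_prod_of_monic _ _ fun j _ => monic_X_add_C _]
    simp only [natDegree_X_add_C, sum_const, card_range, smul_eq_mul, mul_one]
  have := hm.coeff_natDegree
  rwa [hdeg] at this

lemma myCoeff_sub_one (c : ℕ → ℤ) (d : ℕ) :
    (∏ j ∈ range (d+1), (X + C (c j))).coeff d = ∑ j ∈ range (d+1), c j := by
  induction d with
  | zero => simp
  | succ n ih =>
    rw [prod_range_succ, myCoeff_mul_X_add_C, ih, myCoeff_top, mul_one, sum_range_succ,
      sum_range_succ, sum_range_succ]

lemma key (e : ℕ) (i : ℤ) :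
    2 * (Cc (e+2) e i - Cc (e+2) e (i-1)) =
      ((e:ℤ)+2) * ((e:ℤ)+1) * (-((e:ℤ)+2) + 2*i) := by
  have hprod : (∏ j ∈ range (e+2), (X + C (i - j))) * (X + C (i - ((e:ℤ)+2))) =
      (∏ j ∈ range (e+2), (X + C ((i-1) - j))) * (X + C (i - 0)) := by
    have hL := prod_range_succ (fun j : ℕ => X + C (i - (j:ℕ))) (e+2)
    have hR := prod_range_succ' (fun j : ℕ => X + C (i - (j:ℕ))) (e+2)
    rw [show (((e:ℕ)+2 : ℕ):ℤ) = (e:ℤ)+2 by push_cast; ring] at hL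
    have hfun : ∀ j ∈ range (e+2), (X + C (i - ((j+1 : ℕ) : ℤ))) = X + C ((i-1) - (j:ℕ)) :=
      fun j _ => by push_cast; ring_nf
    rw [← hL, hR, Finset.prod_congr rfl hfun]
    norm_num
  have hcoeff := congrArg (fun P => P.coeff (e+1)) hprod
  rw [myCoeff_mul_X_add_C, myCoeff_mul_X_add_C] at hcoeff
  have h1 : Cc (e+2) e i + (i - ((e:ℤ)+2)) * Cc (e+2) (e+1) i
      = Cc (e+2) e (i-1) + (i - 0) * Cc (e+2) (e+1) (i-1) := hcoeff
  have hS : ∀ x : ℤ, Cc (e+2) (e+1) x = ((e:ℤ)+2) * x - ∑ j ∈ range (e+2), (j:ℤ) := by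
    intro x
    have h := myCoeff_sub_one (fun j => x - j) (e+1)
    have h' : Cc (e+2) (e+1) x = ∑ j ∈ range (e+2), (x - j) := h
    rw [h', sum_sub_distrib, sum_const, card_range]
    ring
  have hgauss : (∑ j ∈ range (e+2), (j:ℤ)) * 2 = ((e:ℤ)+2) * ((e:ℤ)+1) := by
    have h2 := Finset.sum_range_id_mul_two (e+2)
    have h3 := congrArg (Nat.cast (R := ℤ)) h2
    push_cast [Nat.add_sub_cancel] at h3
    linarith [h3]
  have hS0 := hS i
  have hS1 := hS (i-1)
  linear_combination 2*h1 + 2*((e:ℤ)+2-i)*hS0 + 2*i*hS1 - ((e:ℤ)+2)*hgauss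

theorem stmt_4 (d : ℕ) (hd : 2 ≤ d) :
    (∀ i : ℤ, 2 * (Cc d (d - 2) i - Cc d (d - 2) (i - 1)) =
      (d : ℤ) * ((d : ℤ) - 1) * (-(d : ℤ) + 2 * i)) ∧
    (∀ i : ℤ, 0 ≤ i → i ≤ (d : ℤ) →
      Cc d (d - 2) ((d / 2 : ℕ) : ℤ) ≤ Cc d (d - 2) i) := by
  obtain ⟨e, rfl⟩ : ∃ e, d = e + 2 := ⟨d - 2, by omega⟩
  simp only [Nat.add_sub_cancel]
  set f : ℤ → ℤ := fun i => Cc (e+2) e i with hf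
  have step : ∀ j : ℤ, 2 * (f j - f (j-1)) =
      ((e:ℤ)+2) * ((e:ℤ)+1) * (-((e:ℤ)+2) + 2*j) := fun j => key e j
  constructor
  · intro i
    have h := step i
    push_cast
    linear_combination h
  · intro i hi0 hid
    set m : ℕ := (e+2)/2 with hm
    have hmb : e + 1 ≤ 2 * m ∧ 2 * m ≤ e + 2 := by omega
    have hm1 : (e:ℤ) + 1 ≤ 2 * (m:ℤ) := by exact_mod_cast hmb.1
    have hm2 : 2 * (m:ℤ) ≤ (e:ℤ) + 2 := by exact_mod_cast hmb.2
    have ha : (0:ℤ) ≤ ((e:ℤ)+2) * ((e:ℤ)+1) := by positivity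
    have up : ∀ k : ℕ, f (m:ℤ) ≤ f ((m:ℤ) + k) := by
      intro k
      induction k with
      | zero => simp
      | succ n ih =>
        have h := step ((m:ℤ) + n + 1)
        rw [show ((m:ℤ) + n + 1) - 1 = (m:ℤ) + n by ring] at h
        have hb : (0:ℤ) ≤ -((e:ℤ)+2) + 2*((m:ℤ) + n + 1) := by
          have : (0:ℤ) ≤ (n:ℤ) := Int.natCast_nonneg n
          linarith
        have := mul_nonneg ha hb
        push_cast
        rw [show (m:ℤ) + ((n:ℤ)+1) = (m:ℤ) + n + 1 by ring]
        linarith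
    have down : ∀ k : ℕ, f (m:ℤ) ≤ f ((m:ℤ) - k) := by
      intro k
      induction k with
      | zero => simp
      | succ n ih =>
        have h := step ((m:ℤ) - n)
        have hb : -((e:ℤ)+2) + 2*((m:ℤ) - n) ≤ 0 := by
          have : (0:ℤ) ≤ (n:ℤ) := Int.natCast_nonneg n
          linarith
        have := mul_nonpos_of_nonneg_of_nonpos ha hb
        rw [show ((m:ℤ) - n) - 1 = (m:ℤ) - (n+1:ℕ) by push_cast; ring] at h
        push_cast
        push_cast at ih h
        linarith
    rcases le_or_gt ((m:ℤ)) i with hle | hlt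
    · have hi : i = (m:ℤ) + ((i - m).toNat : ℤ) := by omega
      rw [hi]
      exact up _
    · have hi : i = (m:ℤ) - (((m:ℤ) - i).toNat : ℤ) := by omega
      rw [hi]
      exact down _
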